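/- arXiv:0906.2279 — 5 statements merged into one kernel-verified Lean document; each statement's English description precedes it below -/
import Mathlib

section
/- For α > -1 and nonnegative integer n, the determinant of the (n+1)×(n+1) Hankel matrix with entries (α+1)_{j+k} for 0 ≤ j,k ≤ n equals ∏_{k=0}^{n} k!·(α+1)_k. -/
/-- The shifted factorial (Pochhammer symbol) (x)ₙ = x(x+1)⋯(x+n-1),
which equals Γ(x+n)/Γ(x) when x > 0. -/
noncomputable def poch (x : ℝ) (n : ℕ) : ℝ := ∏ i ∈ Finset.range n, (x + i)

lemma poch_zero (x : ℝ) : poch x 0 = 1 := by simp [poch]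

lemma poch_succ (x : ℝ) (n : ℕ) : poch x (n+1) = poch x n * (x + n) :=
  Finset.prod_range_succ _ _

lemma poch_succ' (x : ℝ) (n : ℕ) : poch x (n+1) = x * poch (x+1) n := by
  rw [poch, Finset.prod_range_succ']
  rw [mul_comm]
  congr 1
  · push_cast; simp
  · unfold poch
    apply Finset.prod_congr rfl
    intro i _
    push_cast
    ring

lemma poch_add (x : ℝ) (a b : ℕ) : poch x (a+b) = poch x a * poch (x + a) b := by
  unfold poch
  rw [Finset.prod_range_add]
  congr 1
  apply Finset.prod_congr rfl
  intro i _
  push_cast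
  ring

lemma desc_rec (k i : ℕ) :
    (k+1).descFactorial i = k.descFactorial i + i * k.descFactorial (i-1) := by
  cases i with
  | zero => simp
  | succ m =>
    rw [Nat.succ_descFactorial_succ, Nat.descFactorial_succ]
    simp only [Nat.add_sub_cancel]
    rcases le_or_gt m k with h | h
    · have : k - m + (m+1) = k + 1 := by omega
      rw [← this, add_mul]
    · have h1 : k.descFactorial m = 0 := Nat.descFactorial_eq_zero_iff_lt.2 h
      rw [h1]
      ring

lemma key (k : ℕ) : ∀ (x : ℝ) (j : ℕ),
    ∑ i ∈ Finset.range (j+1),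
      (j.choose i : ℝ) * poch (x + i) (j - i) * (k.descFactorial i : ℝ)
    = poch (x + k) j := by
  induction k with
  | zero =>
    intro x j
    rw [Finset.sum_eq_single 0]
    · simp [poch]
    · intro i _ hi
      rcases Nat.exists_eq_succ_of_ne_zero hi with ⟨m, rfl⟩
      simp
    · intro h
      exact absurd (Finset.mem_range.2 (Nat.succ_pos j)) h
  | succ k ih =>
    intro x j
    have step : ∀ i ∈ Finset.range (j+1),
        (j.choose i : ℝ) * poch (x + i) (j - i) * ((k+1).descFactorial i : ℝ)
        = (j.choose i : ℝ) * poch (x + i) (j - i) * (k.descFactorial i : ℝ)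
          + (j.choose i : ℝ) * poch (x + i) (j - i) * (i : ℝ)
            * (k.descFactorial (i-1) : ℝ) := by
      intro i _
      rw [desc_rec]
      push_cast
      ring
    rw [Finset.sum_congr rfl step, Finset.sum_add_distrib, ih x j]
    cases j with
    | zero =>
      simp [poch_zero]
    | succ m =>
      have peel := Finset.sum_range_succ' (fun i =>
        ((m+1).choose i : ℝ) * poch (x + i) (m + 1 - i) * (i : ℝ)
          * (k.descFactorial (i-1) : ℝ)) (m+1)
      rw [peel]
      simp only [Nat.cast_zero, mul_zero, zero_mul, add_zero]
      have term_eq : ∀ i ∈ Finset.range (m+1),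
          ((m+1).choose (i+1) : ℝ) * poch (x + (i+1 : ℕ)) (m + 1 - (i+1)) * ((i+1 : ℕ) : ℝ)
            * (k.descFactorial (i+1-1) : ℝ)
          = ((m+1) : ℝ) * ((m.choose i : ℝ) * poch ((x+1) + i) (m - i)
              * (k.descFactorial i : ℝ)) := by
        intro i _
        have hc : ((m+1) : ℕ) * m.choose i = (m+1).choose (i+1) * (i+1) :=
          Nat.add_one_mul_choose_eq m i
        have hc' : (((m+1).choose (i+1) : ℝ)) * ((i+1 : ℕ) : ℝ) = ((m+1) : ℝ) * (m.choose i : ℝ) := by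
          push_cast
          exact_mod_cast congrArg (fun t : ℕ => (t : ℝ)) hc.symm
        have hp : poch (x + (i+1 : ℕ)) (m + 1 - (i+1)) = poch ((x+1) + i) (m - i) := by
          congr 1
          · push_cast; ring
          · omega
        rw [hp]
        simp only [Nat.add_sub_cancel]
        calc ((m+1).choose (i+1) : ℝ) * poch ((x+1) + i) (m - i) * ((i+1 : ℕ) : ℝ)
              * (k.descFactorial i : ℝ)
            = (((m+1).choose (i+1) : ℝ) * ((i+1 : ℕ) : ℝ)) * (poch ((x+1) + i) (m - i)
              * (k.descFactorial i : ℝ)) := by ring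
          _ = (((m+1) : ℝ) * (m.choose i : ℝ)) * (poch ((x+1) + i) (m - i)
              * (k.descFactorial i : ℝ)) := by rw [hc']
          _ = _ := by ring
      rw [Finset.sum_congr rfl term_eq, ← Finset.mul_sum, ih (x+1) m]
      have h1 : (x + 1) + (k : ℝ) = (x + k) + 1 := by ring
      have h2 : x + ((k : ℕ) + 1 : ℕ) = (x + k) + 1 := by push_cast; ring
      rw [h1, h2, poch_succ' (x+k) m, poch_succ ((x+k)+1) m]
      push_cast
      ring

/-- det ((α+1)_{j+k})_{0 ≤ j,k ≤ n} = ∏_{k=0}^n k! (α+1)_k. -/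
theorem stmt_1 (α : ℝ) (hα : -1 < α) (n : ℕ) :
    (Matrix.of fun j k : Fin (n+1) => poch (α+1) (j.1 + k.1)).det =
      ∏ k ∈ Finset.range (n+1), (Nat.factorial k : ℝ) * poch (α+1) k := by
  set A : Matrix (Fin (n+1)) (Fin (n+1)) ℝ :=
    Matrix.of (fun j i : Fin (n+1) => (j.1.choose i.1 : ℝ) * poch ((α+1) + i.1) (j.1 - i.1))
    with hAdef
  set B : Matrix (Fin (n+1)) (Fin (n+1)) ℝ :=
    Matrix.of (fun i k : Fin (n+1) => poch (α+1) k.1 * ((k.1).descFactorial i.1 : ℝ))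
    with hBdef
  have hM : (Matrix.of fun j k : Fin (n+1) => poch (α+1) (j.1 + k.1)) = A * B := by
    ext j k
    rw [Matrix.mul_apply]
    simp only [hAdef, hBdef, Matrix.of_apply]
    have : ∑ i : Fin (n+1), (j.1.choose i.1 : ℝ) * poch ((α+1) + i.1) (j.1 - i.1)
        * (poch (α+1) k.1 * ((k.1).descFactorial i.1 : ℝ))
        = poch (α+1) k.1 * ∑ i ∈ Finset.range (n+1),
            (j.1.choose i : ℝ) * poch ((α+1) + i) (j.1 - i) * ((k.1).descFactorial i : ℝ) := by
      rw [Finset.mul_sum, ← Fin.sum_univ_eq_sum_range (fun i =>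
        poch (α+1) k.1 * ((j.1.choose i : ℝ) * poch ((α+1) + i) (j.1 - i)
          * ((k.1).descFactorial i : ℝ))) (n+1)]
      apply Finset.sum_congr rfl
      intro i _
      ring
    rw [this]
    have hsub : ∑ i ∈ Finset.range (n+1),
          (j.1.choose i : ℝ) * poch ((α+1) + i) (j.1 - i) * ((k.1).descFactorial i : ℝ)
        = ∑ i ∈ Finset.range (j.1+1),
          (j.1.choose i : ℝ) * poch ((α+1) + i) (j.1 - i) * ((k.1).descFactorial i : ℝ) := by
      symm
      apply Finset.sum_subset
      · intro i hi
        simp only [Finset.mem_range] at *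
        omega
      · intro i _ hi
        simp only [Finset.mem_range, not_lt] at hi
        rw [Nat.choose_eq_zero_of_lt (by omega)]
        simp
    rw [hsub, key k.1 (α+1) j.1,
      show j.1 + k.1 = k.1 + j.1 from Nat.add_comm _ _, poch_add (α+1) k.1 j.1]
  rw [hM, Matrix.det_mul]
  have hA : A.det = 1 := by
    rw [Matrix.det_of_lowerTriangular A (by
      intro i j hij
      have h : (i : ℕ) < (j : ℕ) := hij
      simp only [hAdef, Matrix.of_apply, Nat.choose_eq_zero_of_lt h, Nat.cast_zero, zero_mul])]
    apply Finset.prod_eq_one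
    intro i _
    simp [hAdef, poch_zero]
  have hB : B.det = ∏ k ∈ Finset.range (n+1), (Nat.factorial k : ℝ) * poch (α+1) k := by
    rw [Matrix.det_of_upperTriangular (M := B) (by
      intro i j hij
      have h : (j : ℕ) < (i : ℕ) := hij
      simp only [hBdef, Matrix.of_apply, Nat.descFactorial_eq_zero_iff_lt.2 h,
        Nat.cast_zero, mul_zero])]
    rw [← Fin.prod_univ_eq_prod_range (fun k => (Nat.factorial k : ℝ) * poch (α+1) k) (n+1)]
    apply Finset.prod_congr rfl
    intro i _
    simp only [hBdef, Matrix.of_apply, Nat.descFactorial_self]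
    ring
  rw [hA, hB, one_mul]
end

section
/- Let P be a probability measure on ℝ with positive definite moment matrices G_n and orthonormal polynomials p_m. If z₀ ∈ ℂ with |z₀| = 1 is such that for each m the numbers a_{m,k} z₀^k (k = 0,…,m) all have the same sign (as real numbers times a common phase), then the smallest eigenvalue λ_s of G_n satisfies λ_s ≥ 1 / Σ_{m=0}^{n} |p_m(z₀)|². -/
open MeasureTheory Matrix

/-- If z₀ ∈ ℂ with |z₀| = 1 is such that, for each m, the numbers a_{m,k} z₀^k
(k = 0,…,m) are all nonnegative multiples of a common unit phase, then every
eigenvalue (in particular the smallest) of the moment matrix G_n satisfies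
λ ≥ 1 / Σ_{m=0}^n |p_m(z₀)|². -/
theorem stmt_6 (P : Measure ℝ) [IsProbabilityMeasure P]
    (μ : ℕ → ℝ) (a : ℕ → ℕ → ℝ) (n : ℕ) (z₀ : ℂ)
    (hint : ∀ m : ℕ, Integrable (fun x : ℝ => x ^ m) P)
    (hμ : ∀ m : ℕ, μ m = ∫ x, x ^ m ∂P)
    (htri : ∀ m k : ℕ, m < k → a m k = 0)
    (hlead : ∀ m : ℕ, 0 < a m m)
    (horth : ∀ m l : ℕ,
      (∫ x, (∑ k ∈ Finset.range (m+1), a m k * x ^ k) *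
            (∑ k ∈ Finset.range (l+1), a l k * x ^ k) ∂P)
        = if m = l then 1 else 0)
    (hpd : (Matrix.of fun j k : Fin (n+1) => μ (j.1 + k.1)).PosDef)
    (hz₀ : ‖z₀‖ = 1)
    (hsign : ∀ m : ℕ, ∃ c : ℂ, ‖c‖ = 1 ∧
      ∀ k ≤ m, ∃ r : ℝ, 0 ≤ r ∧ (a m k : ℂ) * z₀ ^ k = (r : ℂ) * c)
    (lam : ℝ)
    (hlam : Module.End.HasEigenvalue
      (Matrix.toLin' (Matrix.of fun j k : Fin (n+1) => μ (j.1 + k.1))) lam) :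
    1 / (∑ m ∈ Finset.range (n+1),
          ‖∑ k ∈ Finset.range (m+1), (a m k : ℂ) * z₀ ^ k‖ ^ 2) ≤ lam := by
  classical
  -- Expansion of integrals of products of polynomials in terms of moments
  have E : ∀ (b c : ℕ → ℝ) (M N : ℕ),
      (∫ x, (∑ j ∈ Finset.range M, b j * x ^ j) *
            (∑ k ∈ Finset.range N, c k * x ^ k) ∂P)
        = ∑ j ∈ Finset.range M, ∑ k ∈ Finset.range N, b j * c k * μ (j + k) := by
    intro b c M N
    have h1 : ∀ x : ℝ, (∑ j ∈ Finset.range M, b j * x ^ j) *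
        (∑ k ∈ Finset.range N, c k * x ^ k)
        = ∑ j ∈ Finset.range M, ∑ k ∈ Finset.range N, (b j * c k) * x ^ (j + k) := by
      intro x
      rw [Finset.sum_mul_sum]
      refine Finset.sum_congr rfl fun j _ => Finset.sum_congr rfl fun k _ => ?_
      rw [pow_add]; ring
    simp_rw [h1]
    rw [MeasureTheory.integral_finset_sum _ (fun j _ =>
      integrable_finset_sum _ (fun k _ => (hint (j+k)).const_mul _))]
    refine Finset.sum_congr rfl fun j _ => ?_
    rw [MeasureTheory.integral_finset_sum _ (fun k _ => (hint (j+k)).const_mul _)]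
    refine Finset.sum_congr rfl fun k _ => ?_
    rw [MeasureTheory.integral_const_mul, hμ (j+k), mul_assoc]
  -- The equal-phase condition gives Σ a_{m,k}² ≤ |p_m(z₀)|²
  have habs : ∀ m : ℕ,
      (∑ k ∈ Finset.range (m+1), (a m k)^2) ≤
      ‖∑ k ∈ Finset.range (m+1), (a m k : ℂ) * z₀ ^ k‖ ^ 2 := by
    intro m
    obtain ⟨c, hc1, hc2⟩ := hsign m
    have hterm : ∀ k ∈ Finset.range (m+1),
        (a m k : ℂ) * z₀ ^ k = ((|a m k| : ℝ) : ℂ) * c := by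
      intro k hk
      rw [Finset.mem_range, Nat.lt_succ_iff] at hk
      obtain ⟨r, hr0, hr⟩ := hc2 k hk
      have h1 : ‖(a m k : ℂ) * z₀ ^ k‖ = |a m k| := by
        rw [norm_mul, norm_pow, hz₀, one_pow, mul_one, Complex.norm_real, Real.norm_eq_abs]
      have h2 : ‖(r : ℂ) * c‖ = r := by
        rw [norm_mul, hc1, mul_one, Complex.norm_real, Real.norm_eq_abs, abs_of_nonneg hr0]
      rw [hr, h2] at h1
      rw [← h1]; exact hr
    have hsum : (∑ k ∈ Finset.range (m+1), (a m k : ℂ) * z₀ ^ k)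
        = (((∑ k ∈ Finset.range (m+1), |a m k|) : ℝ) : ℂ) * c := by
      rw [Finset.sum_congr rfl hterm, ← Finset.sum_mul]
      norm_cast
    rw [hsum, norm_mul, hc1, mul_one, Complex.norm_real, Real.norm_eq_abs,
      abs_of_nonneg (Finset.sum_nonneg fun k _ => abs_nonneg _)]
    calc (∑ k ∈ Finset.range (m+1), (a m k)^2)
        = ∑ k ∈ Finset.range (m+1), |a m k|^2 := by
          refine Finset.sum_congr rfl fun k _ => (sq_abs _).symm
      _ ≤ (∑ k ∈ Finset.range (m+1), |a m k|)^2 :=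
          Finset.sum_sq_le_sq_sum_of_nonneg fun k _ => abs_nonneg _
  set S : ℝ := ∑ m ∈ Finset.range (n+1),
      ‖∑ k ∈ Finset.range (m+1), (a m k : ℂ) * z₀ ^ k‖ ^ 2 with hSdef
  set G : Matrix (Fin (n+1)) (Fin (n+1)) ℝ :=
      Matrix.of (fun j k : Fin (n+1) => μ (j.1 + k.1)) with hGdef
  obtain ⟨v, hv⟩ := hlam.exists_hasEigenvector
  have hGv : G.mulVec v = lam • v := by
    have h := hv.apply_eq_smul
    rwa [Matrix.toLin'_apply] at h
  set A : Matrix (Fin (n+1)) (Fin (n+1)) ℝ :=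
      Matrix.of (fun m k : Fin (n+1) => a m.1 k.1) with hAdef
  have hdetA : IsUnit Aᵀ.det := by
    have htr : Aᵀ.BlockTriangular id := by
      intro i j h
      show A j i = 0
      exact htri j.1 i.1 h
    rw [Matrix.det_of_upperTriangular htr]
    exact IsUnit.mk0 _ (Finset.prod_ne_zero_iff.2 fun i _ => (hlead i.1).ne')
  obtain ⟨d, hvd⟩ : ∃ d : Fin (n+1) → ℝ, Aᵀ.mulVec d = v :=
    ⟨(Aᵀ)⁻¹.mulVec v, by
      rw [Matrix.mulVec_mulVec, Matrix.mul_nonsing_inv _ hdetA, Matrix.one_mulVec]⟩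
  -- orthonormality in matrix form
  have hAGA : A * G * Aᵀ = 1 := by
    ext m l
    have h1 : (A * G * Aᵀ) m l
        = ∑ j : Fin (n+1), ∑ k : Fin (n+1), a m.1 j.1 * a l.1 k.1 * μ (j.1 + k.1) := by
      simp only [Matrix.mul_apply, Matrix.transpose_apply, Finset.sum_mul]
      rw [Finset.sum_comm]
      refine Finset.sum_congr rfl fun j _ => Finset.sum_congr rfl fun k _ => ?_
      show a m.1 j.1 * μ (j.1 + k.1) * a l.1 k.1 = _
      ring
    have h2 : (∑ j : Fin (n+1), ∑ k : Fin (n+1), a m.1 j.1 * a l.1 k.1 * μ (j.1 + k.1))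
        = ∑ j ∈ Finset.range (n+1), ∑ k ∈ Finset.range (n+1),
            a m.1 j * a l.1 k * μ (j + k) := by
      rw [Fin.sum_univ_eq_sum_range
        (fun j => ∑ k : Fin (n+1), a m.1 j * a l.1 k.1 * μ (j + k.1))]
      exact Finset.sum_congr rfl fun j _ =>
        Fin.sum_univ_eq_sum_range (fun k => a m.1 j * a l.1 k * μ (j + k)) (n+1)
    have h3 : (∑ j ∈ Finset.range (n+1), ∑ k ∈ Finset.range (n+1),
            a m.1 j * a l.1 k * μ (j + k))
        = ∑ j ∈ Finset.range (m.1+1), ∑ k ∈ Finset.range (l.1+1),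
            a m.1 j * a l.1 k * μ (j + k) := by
      rw [← Finset.sum_subset (Finset.range_subset_range.2 (Nat.succ_le_succ (Nat.lt_succ_iff.1 m.2)))
        (fun x _ hx => ?_)]
      · refine Finset.sum_congr rfl fun j _ => ?_
        rw [← Finset.sum_subset (Finset.range_subset_range.2 (Nat.succ_le_succ (Nat.lt_succ_iff.1 l.2)))
          (fun x _ hx => ?_)]
        rw [htri l.1 x (by simpa using hx)]; ring
      · refine Finset.sum_eq_zero fun k _ => ?_
        rw [htri m.1 x (by simpa using hx)]; ring
    rw [h1, h2, h3, ← E (a m.1) (a l.1) (m.1+1) (l.1+1), horth m.1 l.1]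
    by_cases h : m = l
    · simp [h, Matrix.one_apply]
    · have : (m : ℕ) ≠ (l : ℕ) := fun hc => h (Fin.ext hc)
      simp [Matrix.one_apply, h, this]
  -- v^T G v = Σ d²
  have hdd : v ⬝ᵥ G.mulVec v = ∑ i : Fin (n+1), d i ^ 2 := by
    conv_lhs => rw [← hvd]
    rw [Matrix.mulVec_mulVec, Matrix.mulVec_transpose, ← Matrix.dotProduct_mulVec,
      Matrix.mulVec_mulVec, ← Matrix.mul_assoc, hAGA, Matrix.one_mulVec]
    simp [dotProduct, pow_two]
  -- v^T G v = lam * Σ v²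
  have hlamv : v ⬝ᵥ G.mulVec v = lam * ∑ i : Fin (n+1), v i ^ 2 := by
    rw [hGv]
    simp only [dotProduct, Pi.smul_apply, smul_eq_mul]
    rw [Finset.mul_sum]
    exact Finset.sum_congr rfl fun i _ => by ring
  -- the coordinates of v in terms of d
  have hvk : ∀ k : Fin (n+1), v k = ∑ m : Fin (n+1), a m.1 k.1 * d m := by
    intro k
    rw [← hvd]
    simp [Matrix.mulVec, dotProduct, Matrix.transpose_apply, hAdef]
  -- per-row bound
  have hS1 : ∀ m : Fin (n+1), (∑ k : Fin (n+1), (a m.1 k.1)^2)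
      ≤ ‖∑ k ∈ Finset.range (m.1+1), (a m.1 k : ℂ) * z₀ ^ k‖ ^ 2 := by
    intro m
    rw [Fin.sum_univ_eq_sum_range (fun k => (a m.1 k)^2) (n+1)]
    have hsub : (∑ k ∈ Finset.range (n+1), (a m.1 k)^2)
        = ∑ k ∈ Finset.range (m.1+1), (a m.1 k)^2 := by
      symm
      refine Finset.sum_subset
        (Finset.range_subset_range.2 (Nat.succ_le_succ (Nat.lt_succ_iff.1 m.2)))
        (fun x _ hx => ?_)
      rw [htri m.1 x (by simpa using hx)]; ring
    rw [hsub]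
    exact habs m.1
  -- Cauchy–Schwarz
  have hcs : (∑ i : Fin (n+1), v i ^ 2) ≤ S * ∑ i : Fin (n+1), d i ^ 2 := by
    have hd2 : (0:ℝ) ≤ ∑ i : Fin (n+1), d i ^ 2 :=
      Finset.sum_nonneg fun i _ => sq_nonneg _
    calc (∑ i : Fin (n+1), v i ^ 2)
        ≤ ∑ k : Fin (n+1), (∑ m : Fin (n+1), (a m.1 k.1)^2) * ∑ m : Fin (n+1), d m ^ 2 := by
          refine Finset.sum_le_sum fun k _ => ?_
          rw [hvk k]
          exact Finset.sum_mul_sq_le_sq_mul_sq _ _ _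
      _ = (∑ k : Fin (n+1), ∑ m : Fin (n+1), (a m.1 k.1)^2) * ∑ m : Fin (n+1), d m ^ 2 :=
          (Finset.sum_mul _ _ _).symm
      _ = (∑ m : Fin (n+1), ∑ k : Fin (n+1), (a m.1 k.1)^2) * ∑ m : Fin (n+1), d m ^ 2 := by
          rw [Finset.sum_comm]
      _ ≤ (∑ m : Fin (n+1),
            ‖∑ k ∈ Finset.range (m.1+1), (a m.1 k : ℂ) * z₀ ^ k‖ ^ 2)
            * ∑ m : Fin (n+1), d m ^ 2 :=
          mul_le_mul_of_nonneg_right (Finset.sum_le_sum fun m _ => hS1 m) hd2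
      _ = S * ∑ i : Fin (n+1), d i ^ 2 := by
          rw [hSdef, Fin.sum_univ_eq_sum_range
            (fun m => ‖∑ k ∈ Finset.range (m+1), (a m k : ℂ) * z₀ ^ k‖ ^ 2) (n+1)]
  -- positivity of ‖v‖²
  have hv2pos : 0 < ∑ i : Fin (n+1), v i ^ 2 := by
    have hex : ∃ i, v i ≠ 0 := by
      by_contra h
      push_neg at h
      exact hv.2 (funext fun i => h i)
    obtain ⟨i, hi⟩ := hex
    refine Finset.sum_pos' (fun j _ => sq_nonneg _) ⟨i, Finset.mem_univ i, ?_⟩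
    positivity
  -- combine
  have hkey : 1 ≤ S * lam := by
    have h1 : (∑ i : Fin (n+1), v i ^ 2) ≤ (S * lam) * ∑ i : Fin (n+1), v i ^ 2 := by
      calc (∑ i : Fin (n+1), v i ^ 2) ≤ S * ∑ i : Fin (n+1), d i ^ 2 := hcs
        _ = S * (v ⬝ᵥ G.mulVec v) := by rw [hdd]
        _ = (S * lam) * ∑ i : Fin (n+1), v i ^ 2 := by rw [hlamv]; ring
    exact (le_mul_iff_one_le_left hv2pos).1 h1
  have hS0 : 0 ≤ S := Finset.sum_nonneg fun m _ => sq_nonneg _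
  have hSpos : 0 < S := by
    rcases hS0.lt_or_eq with h | h
    · exact h
    · exfalso; rw [← h] at hkey; simp at hkey; linarith
  rw [div_le_iff₀ hSpos]
  linarith [hkey]
end

section
/- For 0 < q < 1, α > -1 and nonnegative integer n, det( ((q^{α+1};q)_{j+k} q^{-(j+k)(j+k+1)/2 - α(j+k)})_{j,k=0}^{n} ) = q^{-n(n+1)(4n+6α+5)/6} ∏_{m=0}^{n} (q;q)_m (q^{α+1};q)_m. -/
/-- The q-Pochhammer symbol (a;q)ₘ = ∏_{i=0}^{m-1}(1 - a qⁱ). -/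
noncomputable def qPoch (a q : ℝ) (n : ℕ) : ℝ := ∏ i ∈ Finset.range n, (1 - a * q ^ i)

namespace StmtAux

noncomputable def A (p : ℝ) (j m : ℕ) : ℝ := ∏ i ∈ Finset.range m, (1 - p ^ j * (p ^ i)⁻¹)
noncomputable def C (p : ℝ) (m : ℕ) : ℝ := ∏ i ∈ Finset.range m, (1 - p ^ (i + 1))

lemma qPoch_succ (a q : ℝ) (n : ℕ) : qPoch a q (n+1) = qPoch a q n * (1 - a * q ^ n) :=
  Finset.prod_range_succ _ _

lemma qPoch_succ' (a q : ℝ) (n : ℕ) : qPoch a q (n+1) = (1 - a) * qPoch (a * q) q n := by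
  rw [qPoch, Finset.prod_range_succ', mul_comm]
  simp only [pow_zero, mul_one]
  congr 1
  refine Finset.prod_congr rfl fun i _ => ?_
  rw [pow_succ]; ring

lemma qPoch_add (a q : ℝ) (j k : ℕ) :
    qPoch a q (j + k) = qPoch a q j * qPoch (a * q ^ j) q k := by
  rw [qPoch, Finset.prod_range_add]
  congr 1
  exact Finset.prod_congr rfl fun i _ => by rw [pow_add]; ring

lemma A_zero (p : ℝ) (j : ℕ) : A p j 0 = 1 := by simp [A]

lemma A_succ (p : ℝ) (j m : ℕ) : A p j (m+1) = A p j m * (1 - p ^ j * (p ^ m)⁻¹) :=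
  Finset.prod_range_succ _ _

lemma A_zero_left (p : ℝ) (m : ℕ) : A p 0 (m+1) = 0 := by
  apply Finset.prod_eq_zero (Finset.mem_range.2 (Nat.succ_pos m))
  simp

lemma A_succ_succ {p : ℝ} (hp : p ≠ 0) (j m : ℕ) :
    A p (j+1) (m+1) = (1 - p ^ (j+1)) * A p j m := by
  rw [A, Finset.prod_range_succ']
  simp only [pow_zero, inv_one, mul_one]
  rw [mul_comm]
  congr 1
  refine Finset.prod_congr rfl fun i _ => ?_
  rw [pow_succ, pow_succ, mul_inv]
  field_simp

lemma A_vanish {p : ℝ} (hp : p ≠ 0) {j m : ℕ} (h : j < m) : A p j m = 0 := by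
  apply Finset.prod_eq_zero (Finset.mem_range.2 h)
  rw [mul_inv_cancel₀ (pow_ne_zero _ hp)]
  ring

lemma C_succ (p : ℝ) (m : ℕ) : C p (m+1) = C p m * (1 - p ^ (m+1)) :=
  Finset.prod_range_succ _ _

lemma C_ne_zero {p : ℝ} (h1 : ∀ i : ℕ, (1:ℝ) - p ^ (i+1) ≠ 0) (m : ℕ) : C p m ≠ 0 :=
  Finset.prod_ne_zero_iff.2 fun i _ => h1 i

lemma key {p : ℝ} (hp : p ≠ 0) (h1 : ∀ i : ℕ, (1:ℝ) - p ^ (i+1) ≠ 0) :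
    ∀ (j k : ℕ) (b : ℝ),
      ∑ m ∈ Finset.range (k+1),
        A p k m / C p m * A p j m * b ^ m * p ^ (m*(m-1)) * qPoch (b * p ^ m) p (k - m)
      = qPoch (b * p ^ j) p k := by
  intro j
  induction j with
  | zero =>
    intro k b
    rw [Finset.sum_eq_single_of_mem 0 (Finset.mem_range.2 (Nat.succ_pos k))]
    · simp [A_zero, C]
    · intro m _ hm
      obtain ⟨l, rfl⟩ := Nat.exists_eq_succ_of_ne_zero hm
      rw [A_zero_left]
      ring
  | succ j ih =>
    intro k b
    match k with
    | 0 => simp [A_zero, C, qPoch]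
    | k + 1 =>
      rw [Finset.sum_range_succ']
      have step : ∀ l ∈ Finset.range (k+1),
          A p (k+1) (l+1) / C p (l+1) * A p (j+1) (l+1) * b ^ (l+1) * p ^ ((l+1)*(l+1-1)) *
            qPoch (b * p ^ (l+1)) p (k + 1 - (l+1))
          = A p (k+1) (l+1) / C p (l+1) * A p j (l+1) * b ^ (l+1) * p ^ ((l+1)*(l+1-1)) *
              qPoch (b * p ^ (l+1)) p (k + 1 - (l+1))
            + b * (1 - p ^ (k+1)) * p ^ j *
              (A p k l / C p l * A p j l * (b*p) ^ l * p ^ (l*(l-1)) *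
                qPoch (b * p * p ^ l) p (k - l)) := by
        intro l hl
        have hd : A p (j+1) (l+1) = A p j (l+1) + A p j l * (p ^ j * (p ^ l)⁻¹ * (1 - p ^ (l+1))) := by
          rw [A_succ_succ hp, A_succ]
          have : p ^ (j+1) = p ^ j * (p ^ l)⁻¹ * p ^ (l+1) := by
            rw [pow_succ p l, pow_succ p j]
            field_simp
          rw [this]; ring
        rw [hd]
        have hAk : A p (k+1) (l+1) = (1 - p ^ (k+1)) * A p k l := A_succ_succ hp k l
        have hC : C p (l+1) = C p l * (1 - p ^ (l+1)) := C_succ p l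
        have hq1 : b * p ^ (l+1) = b * p * p ^ l := by rw [pow_succ]; ring
        have hsub : k + 1 - (l+1) = k - l := by omega
        rw [hq1, hsub, hAk, hC]
        have h2 : ((l+1)*(l+1-1)) = l*(l-1) + 2*l := by
          rcases l with _ | l
          · rfl
          · simp only [Nat.succ_sub_one]; ring
        rw [h2, pow_add]
        have hCl := C_ne_zero h1 l
        have hl1 := h1 l
        have hpl : (p:ℝ) ^ l ≠ 0 := pow_ne_zero _ hp
        field_simp
        ring
      rw [Finset.sum_congr rfl step, Finset.sum_add_distrib, ← Finset.mul_sum]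
      have ihA := ih (k+1) b
      rw [Finset.sum_range_succ'] at ihA
      have ihB := ih k (b*p)
      rw [ihB]
      have final : qPoch (b * p ^ j) p (k+1)
          + b * (1 - p ^ (k+1)) * p ^ j * qPoch (b * p * p ^ j) p k
          = qPoch (b * p ^ (j+1)) p (k+1) := by
        have e1 : b * p * p ^ j = b * p ^ (j+1) := by rw [pow_succ]; ring
        rw [e1, qPoch_succ' (b * p ^ j) p k, qPoch_succ (b * p ^ (j+1)) p k]
        have e2 : b * p ^ j * p = b * p ^ (j+1) := by rw [pow_succ]; ring
        rw [e2]
        rw [pow_succ p j, pow_succ p k]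
        ring
      simp only [A_zero] at ihA ⊢
      linarith [ihA, final]

lemma qPoch_zero (a q : ℝ) : qPoch a q 0 = 1 := by simp [qPoch]

lemma A_diag {p : ℝ} (hp : p ≠ 0) (m : ℕ) : A p m m = C p m := by
  rw [A, C, ← Finset.prod_range_reflect (fun i => 1 - p ^ (i+1)) m]
  refine Finset.prod_congr rfl fun i hi => ?_
  rw [Finset.mem_range] at hi
  have h1 : m - 1 - i + 1 = m - i := by omega
  rw [h1, pow_sub₀ p hp (by omega : i ≤ m)]

lemma hankel_det {p : ℝ} (hp : p ≠ 0) (h1 : ∀ i : ℕ, (1:ℝ) - p ^ (i+1) ≠ 0)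
    (b : ℝ) (n : ℕ) :
    (Matrix.of fun j k : Fin (n+1) => qPoch b p (j.1 + k.1)).det
      = ∏ m ∈ Finset.range (n+1), (b ^ m * p ^ (m*(m-1)) * C p m * qPoch b p m) := by
  set N := n + 1
  set L : Matrix (Fin N) (Fin N) ℝ :=
    Matrix.of fun j m : Fin N => A p j.1 m.1 / C p m.1 * qPoch (b * p ^ m.1) p (j.1 - m.1)
    with hL
  set U : Matrix (Fin N) (Fin N) ℝ :=
    Matrix.of fun m k : Fin N =>
      (b ^ m.1 * p ^ (m.1*(m.1-1)) * C p m.1 * qPoch b p m.1) *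
        (A p k.1 m.1 / C p m.1 * qPoch (b * p ^ m.1) p (k.1 - m.1))
    with hU
  have hfact : (Matrix.of fun j k : Fin N => qPoch b p (j.1 + k.1)) = L * U := by
    ext j k
    rw [Matrix.mul_apply]
    simp only [hL, hU, Matrix.of_apply]
    rw [Fin.sum_univ_eq_sum_range (fun m =>
      A p j.1 m / C p m * qPoch (b * p ^ m) p (j.1 - m) *
        ((b ^ m * p ^ (m*(m-1)) * C p m * qPoch b p m) *
          (A p k.1 m / C p m * qPoch (b * p ^ m) p (k.1 - m)))) N]
    rw [← Finset.sum_subset (Finset.range_subset_range.2 (Nat.succ_le_of_lt k.2))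
      (fun m _ hm => by
        rw [Finset.mem_range, not_lt] at hm
        have : A p k.1 m = 0 := A_vanish hp (by omega)
        rw [this]
        ring)]
    have hterm : ∀ m ∈ Finset.range (k.1+1),
        A p j.1 m / C p m * qPoch (b * p ^ m) p (j.1 - m) *
          ((b ^ m * p ^ (m*(m-1)) * C p m * qPoch b p m) *
            (A p k.1 m / C p m * qPoch (b * p ^ m) p (k.1 - m)))
        = qPoch b p j.1 *
            (A p k.1 m / C p m * A p j.1 m * b ^ m * p ^ (m*(m-1)) *
              qPoch (b * p ^ m) p (k.1 - m)) := by
      intro m _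
      by_cases hmj : m ≤ j.1
      · have : qPoch b p j.1 = qPoch b p m * qPoch (b * p ^ m) p (j.1 - m) := by
          conv_lhs => rw [show j.1 = m + (j.1 - m) by omega]
          exact qPoch_add b p m (j.1 - m)
        rw [this]
        have hC := C_ne_zero h1 m
        field_simp
      · have : A p j.1 m = 0 := A_vanish hp (by omega)
        rw [this]
        ring
    rw [Finset.sum_congr rfl hterm, ← Finset.mul_sum, key hp h1 j.1 k.1 b,
      ← qPoch_add b p j.1 k.1]
  rw [hfact, Matrix.det_mul]
  have hLdet : L.det = 1 := by
    rw [Matrix.det_of_lowerTriangular L (fun i j hij => by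
      simp only [hL, Matrix.of_apply]
      rw [A_vanish hp (show i.1 < j.1 from hij)]
      ring)]
    refine Finset.prod_eq_one fun m _ => ?_
    simp only [hL, Matrix.of_apply, Nat.sub_self, qPoch_zero, mul_one, A_diag hp]
    exact div_self (C_ne_zero h1 m.1)
  have hUdet : U.det = ∏ m ∈ Finset.range (n+1), (b ^ m * p ^ (m*(m-1)) * C p m * qPoch b p m) := by
    rw [Matrix.det_of_upperTriangular (show U.BlockTriangular id from fun i j hij => by
      simp only [hU, Matrix.of_apply]
      rw [A_vanish hp (show j.1 < i.1 from hij)]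
      ring)]
    rw [← Fin.prod_univ_eq_prod_range (fun m => b ^ m * p ^ (m*(m-1)) * C p m * qPoch b p m) N]
    refine Finset.prod_congr rfl fun m _ => ?_
    simp only [hU, Matrix.of_apply, Nat.sub_self, qPoch_zero, mul_one, A_diag hp]
    rw [div_self (C_ne_zero h1 m.1), mul_one]
  rw [hLdet, hUdet, one_mul]

lemma rpow_flip {q : ℝ} (hq : 0 < q) (x : ℝ) :
    (1 : ℝ) - q ^ (-x) = -(q ^ (-x)) * (1 - q ^ x) := by
  have hmul : q ^ (-x) * q ^ x = 1 := by
    rw [← Real.rpow_add hq]; simp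
  linear_combination (-1 : ℝ) * hmul

lemma entry_eq {q : ℝ} (hq : 0 < q) (α : ℝ) (s : ℕ) :
    qPoch (q ^ (α+1)) q s * q ^ (-((s:ℝ) * ((s:ℝ)+1)) / 2 - α * s)
      = (-1 : ℝ)^s * qPoch (q ^ (-(α+1))) q⁻¹ s := by
  have hexp : ∀ t : ℕ, ∑ i ∈ Finset.range t, (-(α+1+(i:ℝ)))
      = -((t:ℝ) * ((t:ℝ)+1)) / 2 - α * t := by
    intro t
    induction t with
    | zero => simp
    | succ r ih => rw [Finset.sum_range_succ, ih]; push_cast; ring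
  rw [show -((s:ℝ) * ((s:ℝ)+1)) / 2 - α * s = ∑ i ∈ Finset.range s, (-(α+1+(i:ℝ))) from
    (hexp s).symm]
  rw [Real.rpow_sum_of_pos hq]
  rw [show ((-1:ℝ))^s = ∏ _i ∈ Finset.range s, (-1:ℝ) by simp]
  rw [qPoch, qPoch, ← Finset.prod_mul_distrib, ← Finset.prod_mul_distrib]
  refine Finset.prod_congr rfl fun i _ => ?_
  have hadd : ∀ x y : ℝ, q ^ (x+y) = q ^ x * q ^ y := fun x y => Real.rpow_add hq x y
  have hX : q ^ (α+1) * q ^ i = q ^ (α+1+(i:ℝ)) := by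
    rw [← Real.rpow_natCast q i, ← Real.rpow_add hq]
  have hXinv : q ^ (-(α+1+(i:ℝ))) = (q ^ (α+1+(i:ℝ)))⁻¹ := by
    rw [Real.rpow_neg hq.le]
  have hb : q ^ (-(α+1)) * (q⁻¹) ^ i = q ^ (-(α+1+(i:ℝ))) := by
    rw [inv_pow, ← Real.rpow_natCast q i, ← Real.rpow_neg hq.le, ← hadd]
    congr 1; ring
  rw [hX, hb, hXinv]
  have hXne : q ^ (α+1+(i:ℝ)) ≠ 0 := (Real.rpow_pos_of_pos hq _).ne'
  field_simp
  ring

lemma factor_eq {q : ℝ} (hq : 0 < q) (α : ℝ) (i : ℕ) :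
    q ^ (-(α+1)) * (q⁻¹) ^ (2*i) * (1 - (q⁻¹) ^ (i+1)) * (1 - q ^ (-(α+1)) * (q⁻¹) ^ i)
      = q ^ (-(2*α+3+4*(i:ℝ))) * ((1 - q * q ^ i) * (1 - q ^ (α+1) * q ^ i)) := by
  have hadd : ∀ x y : ℝ, q ^ (x+y) = q ^ x * q ^ y := fun x y => Real.rpow_add hq x y
  have hne : ∀ x : ℝ, q ^ x ≠ 0 := fun x => (Real.rpow_pos_of_pos hq x).ne'
  have hip : ∀ k : ℕ, (q⁻¹) ^ k = q ^ (-(k:ℝ)) := fun k => by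
    rw [inv_pow, ← Real.rpow_natCast q k, ← Real.rpow_neg hq.le]
  rw [hip, hip, hip, ← Real.rpow_natCast q i]
  push_cast
  rw [show (1:ℝ) - q ^ (-(α+1)) * q ^ (-(i:ℝ)) = 1 - q ^ (-(α+1+(i:ℝ))) by
    rw [← hadd]; congr 2; ring]
  rw [rpow_flip hq ((i:ℝ)+1), rpow_flip hq (α+1+(i:ℝ))]
  rw [show (1:ℝ) - q * q ^ ((i:ℝ)) = 1 - q ^ ((i:ℝ)+1) by
    rw [hadd, Real.rpow_one]; ring]
  rw [show q ^ (α+1) * q ^ ((i:ℝ)) = q ^ (α+1+(i:ℝ)) from (hadd _ _).symm]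
  rw [show q ^ (-(2*α+3+4*(i:ℝ))) = q ^ (-(α+1)) * q ^ (-(2*(i:ℝ))) * q ^ (-((i:ℝ)+1))
      * q ^ (-(α+1+(i:ℝ))) by
    rw [← hadd, ← hadd, ← hadd]; congr 1; ring]
  ring

lemma dm_eq {q : ℝ} (hq : 0 < q) (α : ℝ) (m : ℕ) :
    (q ^ (-(α+1)) : ℝ) ^ m * (q⁻¹) ^ (m*(m-1)) * C q⁻¹ m * qPoch (q ^ (-(α+1))) q⁻¹ m
      = q ^ (-(2*(m:ℝ)^2 + m + 2*α*m)) * (qPoch q q m * qPoch (q ^ (α+1)) q m) := by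
  have l1 : (q ^ (-(α+1)) : ℝ) ^ m = ∏ _i ∈ Finset.range m, q ^ (-(α+1)) := by simp
  have hsum : ∑ i ∈ Finset.range m, 2*i = m*(m-1) := by
    have h2 : ∑ i ∈ Finset.range m, 2*i = (∑ i ∈ Finset.range m, i) * 2 := by
      rw [Finset.sum_mul]
      exact Finset.sum_congr rfl fun i _ => by ring
    rw [h2, Finset.sum_range_id_mul_two]
  have l2 : (q⁻¹ : ℝ) ^ (m*(m-1)) = ∏ i ∈ Finset.range m, (q⁻¹) ^ (2*i) := by
    rw [Finset.prod_pow_eq_pow_sum, hsum]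
  have rhs_exp : ∀ t : ℕ, -(2*(t:ℝ)^2 + (t:ℝ) + 2*α*t) = ∑ i ∈ Finset.range t, (-(2*α+3+4*(i:ℝ))) := by
    intro t
    induction t with
    | zero => simp
    | succ r ih => rw [Finset.sum_range_succ, ← ih]; push_cast; ring
  rw [l1, l2, C, qPoch, ← Finset.prod_mul_distrib, ← Finset.prod_mul_distrib,
    ← Finset.prod_mul_distrib, rhs_exp m, Real.rpow_sum_of_pos hq,
    qPoch, qPoch, ← Finset.prod_mul_distrib, ← Finset.prod_mul_distrib]
  exact Finset.prod_congr rfl fun i _ => factor_eq hq α i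

lemma sign_diag_det {n : ℕ} (H : Matrix (Fin (n+1)) (Fin (n+1)) ℝ) :
    (Matrix.diagonal (fun j : Fin (n+1) => (-1:ℝ)^j.1) * H *
      Matrix.diagonal (fun j : Fin (n+1) => (-1:ℝ)^j.1)).det = H.det := by
  rw [Matrix.det_mul, Matrix.det_mul, Matrix.det_diagonal]
  have h1 : (∏ j : Fin (n+1), ((-1:ℝ)) ^ j.1) * (∏ j : Fin (n+1), ((-1:ℝ)) ^ j.1) = 1 := by
    rw [← Finset.prod_mul_distrib]
    refine Finset.prod_eq_one fun j _ => ?_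
    rw [← mul_pow]
    norm_num
  calc (∏ j : Fin (n+1), ((-1:ℝ)) ^ j.1) * H.det * (∏ j : Fin (n+1), ((-1:ℝ)) ^ j.1)
      = H.det * ((∏ j : Fin (n+1), ((-1:ℝ)) ^ j.1) * (∏ j : Fin (n+1), ((-1:ℝ)) ^ j.1)) := by
        ring
    _ = H.det := by rw [h1, mul_one]

end StmtAux

open StmtAux

/-- det ((q^{α+1};q)_{j+k} q^{-(j+k)(j+k+1)/2-α(j+k)})_{j,k=0}^n
= q^{-n(n+1)(4n+6α+5)/6} ∏_{m=0}^n (q;q)_m (q^{α+1};q)_m. -/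
theorem stmt_12 (q α : ℝ) (hq : 0 < q) (hq1 : q < 1) (hα : -1 < α) (n : ℕ) :
    (Matrix.of fun j k : Fin (n+1) =>
        qPoch (q ^ (α+1)) q (j.1 + k.1) *
          q ^ (-(((j.1:ℝ) + k.1) * ((j.1:ℝ) + k.1 + 1)) / 2 - α * ((j.1:ℝ) + k.1))).det =
      q ^ (-((n:ℝ) * (n+1) * (4*n + 6*α + 5)) / 6) *
        ∏ m ∈ Finset.range (n+1), qPoch q q m * qPoch (q ^ (α+1)) q m := by
  have hp : (q⁻¹ : ℝ) ≠ 0 := inv_ne_zero hq.ne'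
  have hpl : (1:ℝ) < q⁻¹ := (one_lt_inv₀ hq).2 hq1
  have h1 : ∀ i : ℕ, (1:ℝ) - (q⁻¹) ^ (i+1) ≠ 0 := fun i => by
    have : (1:ℝ) < (q⁻¹) ^ (i+1) := one_lt_pow₀ hpl (Nat.succ_ne_zero i)
    exact sub_ne_zero_of_ne (ne_of_lt this)
  set b : ℝ := q ^ (-(α+1)) with hb
  -- rewrite the matrix as D * H * D
  have hM : (Matrix.of fun j k : Fin (n+1) =>
        qPoch (q ^ (α+1)) q (j.1 + k.1) *
          q ^ (-(((j.1:ℝ) + k.1) * ((j.1:ℝ) + k.1 + 1)) / 2 - α * ((j.1:ℝ) + k.1)))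
      = Matrix.diagonal (fun j : Fin (n+1) => (-1:ℝ)^j.1) *
          (Matrix.of fun j k : Fin (n+1) => qPoch b q⁻¹ (j.1 + k.1)) *
          Matrix.diagonal (fun j : Fin (n+1) => (-1:ℝ)^j.1) := by
    ext j k
    rw [Matrix.mul_diagonal, Matrix.diagonal_mul]
    simp only [Matrix.of_apply]
    have hcast : ((j.1 + k.1 : ℕ) : ℝ) = (j.1:ℝ) + k.1 := by push_cast; ring
    have := entry_eq hq α (j.1 + k.1)
    rw [hcast] at this
    rw [show -(((j.1:ℝ) + k.1) * ((j.1:ℝ) + k.1 + 1)) / 2 - α * ((j.1:ℝ) + k.1)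
        = -(((j.1:ℝ) + (k.1:ℝ)) * (((j.1:ℝ) + (k.1:ℝ))+1)) / 2 - α * ((j.1:ℝ)+(k.1:ℝ)) by ring]
    rw [this, pow_add]
    ring
  rw [hM, sign_diag_det, hankel_det hp h1 b n]
  have hrw : ∀ m ∈ Finset.range (n+1),
      b ^ m * (q⁻¹) ^ (m*(m-1)) * C q⁻¹ m * qPoch b q⁻¹ m
        = q ^ (-(2*(m:ℝ)^2 + m + 2*α*m)) * (qPoch q q m * qPoch (q ^ (α+1)) q m) :=
    fun m _ => dm_eq hq α m
  rw [Finset.prod_congr rfl hrw, Finset.prod_mul_distrib, ← Real.rpow_sum_of_pos hq]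
  congr 1
  have : ∀ t : ℕ, ∑ m ∈ Finset.range (t+1), (-(2*(m:ℝ)^2 + m + 2*α*m))
      = -((t:ℝ) * ((t:ℝ)+1) * (4*(t:ℝ) + 6*α + 5)) / 6 := by
    intro t
    induction t with
    | zero => simp
    | succ r ih => rw [Finset.sum_range_succ, ih]; push_cast; ring
  rw [this n]
end

section
/- For 0 < q < 1 and complex b with |b| < 1, Cauchy's identity holds: Σ_{n=0}^{∞} q^{n(n-1)} bⁿ / ((q;q)ₙ (b;q)ₙ) = 1/(b;q)_∞. -/
/-- The q-Pochhammer symbol (a;q)ₙ = ∏_{i=0}^{n-1}(1 - a qⁱ) for complex a, real q. -/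
noncomputable def qPochC (a : ℂ) (q : ℝ) (n : ℕ) : ℂ :=
  ∏ i ∈ Finset.range n, (1 - a * (q:ℂ) ^ i)

/-- (b;q)_∞ = ∏_{m≥0}(1 - b q^m). -/
noncomputable def qPochInfC (b : ℂ) (q : ℝ) : ℂ := ∏' m : ℕ, (1 - b * (q:ℂ) ^ m)

open Finset Filter Topology

namespace C15

/-- summand of the j-th shifted Cauchy sum -/
noncomputable def A (q : ℝ) (c : ℂ) (j n : ℕ) : ℂ :=
  (q:ℂ) ^ (n*(n-1) + j*n) * c ^ n / (qPochC (q:ℂ) q n * qPochC c q (n + j))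

noncomputable def S (q : ℝ) (c : ℂ) (j : ℕ) : ℂ := ∑' n, A q c j n

lemma qPoch_succ (a : ℂ) (q : ℝ) (n : ℕ) :
    qPochC a q (n+1) = qPochC a q n * (1 - a * (q:ℂ)^n) := Finset.prod_range_succ _ _

lemma qPoch_succ' (a : ℂ) (q : ℝ) (n : ℕ) :
    qPochC a q (n+1) = (1 - a) * qPochC ((q:ℂ) * a) q n := by
  rw [qPochC, Finset.prod_range_succ', qPochC]
  rw [pow_zero, mul_one, mul_comm]
  congr 1
  refine Finset.prod_congr rfl fun i _ => ?_
  rw [pow_succ']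
  ring

lemma norm_q (q : ℝ) (hq : 0 < q) : ‖(q:ℂ)‖ = q := by
  simp [Complex.norm_real, abs_of_pos hq]

lemma qPoch_norm_ge {q : ℝ} (hq : 0 < q) (hq1 : q < 1) {a : ℂ} {s : ℝ} (ha : ‖a‖ ≤ s)
    (hs : s < 1) (m : ℕ) : (1 - s)^m ≤ ‖qPochC a q m‖ := by
  rw [qPochC, norm_prod]
  have h0 : (0:ℝ) ≤ 1 - s := by
    have := (norm_nonneg a).trans ha
    linarith
  calc (1-s)^m = ∏ _i ∈ range m, (1-s) := by rw [prod_const, card_range]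
  _ ≤ ∏ i ∈ range m, ‖1 - a*(q:ℂ)^i‖ := by
      refine Finset.prod_le_prod (fun _ _ => h0) (fun i _ => ?_)
      have hqi : q ^ i ≤ 1 := pow_le_one₀ hq.le hq1.le
      have h1 : ‖a * (q:ℂ)^i‖ ≤ s := by
        rw [norm_mul, norm_pow, norm_q q hq]
        have := mul_le_mul ha hqi (pow_nonneg hq.le i) ((norm_nonneg a).trans ha)
        simpa using this
      have h2 : 1 - ‖a*(q:ℂ)^i‖ ≤ ‖1 - a*(q:ℂ)^i‖ := by
        have := norm_sub_norm_le (1:ℂ) (a*(q:ℂ)^i)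
        simpa using this
      linarith

lemma qPoch_ne_zero {q : ℝ} (hq : 0 < q) (hq1 : q < 1) {a : ℂ} (ha : ‖a‖ < 1) (m : ℕ) :
    qPochC a q m ≠ 0 := by
  have h := qPoch_norm_ge hq hq1 le_rfl ha m
  have : (0:ℝ) < (1 - ‖a‖)^m := pow_pos (by linarith) m
  intro h0
  rw [h0, norm_zero] at h
  linarith

lemma summable_aux {q ρ : ℝ} (hq : 0 < q) (hq1 : q < 1) (hρ : 0 ≤ ρ) :
    Summable (fun n => q^(n*(n-1)) * ρ^n) := by
  obtain ⟨N, hN⟩ : ∃ N, q^N * ρ < 1/2 := by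
    have h1 : Tendsto (fun N : ℕ => q^N * ρ) atTop (𝓝 (0*ρ)) :=
      (tendsto_pow_atTop_nhds_zero_of_lt_one hq.le hq1).mul_const ρ
    rw [zero_mul] at h1
    exact (h1.eventually_lt_const (by norm_num : (0:ℝ) < 1/2)).exists
  rw [← summable_nat_add_iff (N+1)]
  refine Summable.of_nonneg_of_le (fun n => by positivity) (fun n => ?_)
    (summable_geometric_of_lt_one (by norm_num) (by norm_num : (1:ℝ)/2 < 1))
  set m := n + (N+1) with hm
  have h3 : q^(m-1) ≤ q^N := pow_le_pow_of_le_one hq.le hq1.le (by omega)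
  calc q^(m*(m-1)) * ρ^m = (q^(m-1)*ρ)^m := by
        rw [mul_pow, ← pow_mul, mul_comm (m-1) m]
  _ ≤ (q^N*ρ)^m := by
        apply pow_le_pow_left₀ (by positivity)
        exact mul_le_mul_of_nonneg_right h3 hρ
  _ ≤ (1/2)^m := pow_le_pow_left₀ (by positivity) hN.le m
  _ ≤ (1/2)^n := pow_le_pow_of_le_one (by norm_num) (by norm_num) (by omega)

lemma A_norm_le {q r : ℝ} (hq : 0 < q) (hq1 : q < 1) (hr : r < 1) {c : ℂ} (hc : ‖c‖ ≤ r)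
    (j n : ℕ) :
    ‖A q c j n‖ ≤ q^(n*(n-1)) * (r/((1-q)*(1-r)))^n * ((1-r)^j)⁻¹ := by
  have hr0 : 0 ≤ r := (norm_nonneg c).trans hc
  have h1q : 0 < 1 - q := by linarith
  have h1r : 0 < 1 - r := by linarith
  have hqn : ‖(q:ℂ)‖ = q := norm_q q hq
  have hden : (1-q)^n * (1-r)^(n+j) ≤ ‖qPochC (q:ℂ) q n * qPochC c q (n+j)‖ := by
    rw [norm_mul]
    exact mul_le_mul (qPoch_norm_ge hq hq1 (le_of_eq hqn) hq1 n)
      (qPoch_norm_ge hq hq1 hc hr (n+j)) (pow_nonneg h1r.le _) (norm_nonneg _)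
  have hnum : ‖(q:ℂ)^(n*(n-1)+j*n) * c^n‖ ≤ q^(n*(n-1)) * r^n := by
    rw [norm_mul, norm_pow, norm_pow, hqn]
    refine mul_le_mul ?_ (pow_le_pow_left₀ (norm_nonneg c) hc n)
      (pow_nonneg (norm_nonneg c) n) (pow_nonneg hq.le _)
    exact pow_le_pow_of_le_one hq.le hq1.le (Nat.le_add_right _ _)
  calc ‖A q c j n‖ ≤ (q^(n*(n-1)) * r^n) / ((1-q)^n * (1-r)^(n+j)) := by
        rw [A, norm_div]
        exact div_le_div₀ (by positivity) hnum (by positivity) hden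
  _ = q^(n*(n-1)) * (r/((1-q)*(1-r)))^n * ((1-r)^j)⁻¹ := by
        rw [pow_add, div_pow, mul_pow, div_eq_mul_inv, div_eq_mul_inv, mul_inv, mul_inv]
        ring

lemma summable_A {q r : ℝ} (hq : 0 < q) (hq1 : q < 1) (hr : r < 1) {c : ℂ} (hc : ‖c‖ ≤ r)
    (j : ℕ) : Summable (fun n => A q c j n) := by
  have hr0 : 0 ≤ r := (norm_nonneg c).trans hc
  have hρ : 0 ≤ r/((1-q)*(1-r)) := by
    have h1q : 0 < 1 - q := by linarith
    have h1r : 0 < 1 - r := by linarith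
    positivity
  exact Summable.of_norm_bounded ((summable_aux hq hq1 hρ).mul_right _)
    (A_norm_le hq hq1 hr hc j)

lemma norm_S_le {q r : ℝ} (hq : 0 < q) (hq1 : q < 1) (hr : r < 1) {c : ℂ} (hc : ‖c‖ ≤ r)
    (j : ℕ) :
    ‖S q c j‖ ≤ (∑' n : ℕ, q^(n*(n-1)) * (r/((1-q)*(1-r)))^n) * ((1-r)^j)⁻¹ := by
  have hr0 : 0 ≤ r := (norm_nonneg c).trans hc
  have hρ : 0 ≤ r/((1-q)*(1-r)) := by
    have h1q : 0 < 1 - q := by linarith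
    have h1r : 0 < 1 - r := by linarith
    positivity
  have hsum := summable_aux hq hq1 hρ (q := q)
  have hb := A_norm_le hq hq1 hr hc j
  have hsn : Summable (fun n => ‖A q c j n‖) :=
    Summable.of_nonneg_of_le (fun n => norm_nonneg _) hb (hsum.mul_right _)
  calc ‖S q c j‖ ≤ ∑' n, ‖A q c j n‖ := norm_tsum_le_tsum_norm hsn
  _ ≤ ∑' n, q^(n*(n-1)) * (r/((1-q)*(1-r)))^n * ((1-r)^j)⁻¹ :=
      Summable.tsum_le_tsum hb hsn (hsum.mul_right _)
  _ = _ := tsum_mul_right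

noncomputable def U (q : ℝ) (c : ℂ) (j n : ℕ) : ℂ :=
  (q:ℂ)^(n*(n-1) + j*n) * c^n * (1 - (q:ℂ)^n) / (qPochC (q:ℂ) q n * qPochC c q (n+j+1))

lemma U_zero (q : ℝ) (c : ℂ) (j : ℕ) : U q c j 0 = 0 := by simp [U]

lemma one_sub_ne {x : ℂ} (hx : ‖x‖ < 1) : (1:ℂ) - x ≠ 0 := by
  intro h
  rw [← sub_eq_zero.mp h] at hx
  simp at hx

lemma normq_lt {q : ℝ} (hq : 0 < q) (hq1 : q < 1) : ‖(q:ℂ)‖ < 1 := by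
  rw [norm_q q hq]; exact hq1

lemma norm_mul_pow_le {q : ℝ} (hq : 0 < q) (hq1 : q < 1) {c : ℂ} (hc : ‖c‖ < 1) (k : ℕ) :
    ‖c * (q:ℂ)^k‖ < 1 := by
  rw [norm_mul, norm_pow, norm_q q hq]
  calc ‖c‖ * q^k ≤ ‖c‖ * 1 := by
        exact mul_le_mul_of_nonneg_left (pow_le_one₀ hq.le hq1.le) (norm_nonneg c)
  _ < 1 := by simpa using hc

lemma U_succ {q : ℝ} (hq : 0 < q) (hq1 : q < 1) {c : ℂ} (hc : ‖c‖ < 1) (j n : ℕ) :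
    U q c j (n+1) = (q:ℂ)^j * c * A q c (j+2) n := by
  have he : (n+1)*((n+1)-1) + j*(n+1) = (n*(n-1) + (j+2)*n) + j := by
    cases n with
    | zero => simp
    | succ m => simp only [Nat.succ_sub_one]; ring
  have hPq := qPoch_ne_zero hq hq1 (normq_lt hq hq1) n
  have hPc := qPoch_ne_zero hq hq1 hc (n+(j+2))
  have hfac : (1:ℂ) - (q:ℂ) * (q:ℂ)^n ≠ 0 := by
    have : ‖(q:ℂ) * (q:ℂ)^n‖ < 1 := norm_mul_pow_le hq hq1 (normq_lt hq hq1) n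
    exact one_sub_ne this
  rw [U, A, qPoch_succ (q:ℂ) q n, show n+1+j+1 = n+(j+2) by omega, he, pow_add]
  field_simp
  ring

lemma key {q : ℝ} (hq : 0 < q) (hq1 : q < 1) {c : ℂ} (hc : ‖c‖ < 1) (j n : ℕ) :
    A q c j n - A q c (j+1) n = U q c j n - (q:ℂ)^j * c * A q c (j+1) n := by
  have he : n*(n-1) + (j+1)*n = (n*(n-1) + j*n) + n := by ring
  have hPq := qPoch_ne_zero hq hq1 (normq_lt hq hq1) n
  have hPc := qPoch_ne_zero hq hq1 hc (n+j)
  have hfac : (1:ℂ) - c * (q:ℂ)^(n+j) ≠ 0 := one_sub_ne (norm_mul_pow_le hq hq1 hc (n+j))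
  rw [A, A, U, show n+(j+1) = (n+j)+1 from rfl, qPoch_succ, he, pow_add]
  field_simp
  ring

lemma summable_U {q r : ℝ} (hq : 0 < q) (hq1 : q < 1) (hr : r < 1) {c : ℂ} (hc : ‖c‖ ≤ r)
    (j : ℕ) : Summable (fun n => U q c j n) := by
  have hc1 : ‖c‖ < 1 := lt_of_le_of_lt hc hr
  have hA := fun j' => summable_A hq hq1 hr hc j'
  refine Summable.congr (f := fun n => (A q c j n - A q c (j+1) n) +
      (q:ℂ)^j * c * A q c (j+1) n) (((hA j).sub (hA (j+1))).add ((hA (j+1)).mul_left _))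
    (fun n => ?_)
  have hk := key hq hq1 hc1 j n
  simp only [hk]
  ring

lemma Srec {q r : ℝ} (hq : 0 < q) (hq1 : q < 1) (hr : r < 1) {c : ℂ} (hc : ‖c‖ ≤ r) (j : ℕ) :
    S q c j - S q c (j+1) = -((q:ℂ)^j * c) * (S q c (j+1) - S q c (j+2)) := by
  have hc1 : ‖c‖ < 1 := lt_of_le_of_lt hc hr
  have hA := fun j' => summable_A hq hq1 hr hc j'
  have hU := summable_U hq hq1 hr hc j
  have h1 : S q c j - S q c (j+1) = ∑' n, (A q c j n - A q c (j+1) n) :=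
    (Summable.tsum_sub (hA j) (hA (j+1))).symm
  have h2 : (∑' n, (A q c j n - A q c (j+1) n)) =
      (∑' n, U q c j n) - (q:ℂ)^j * c * S q c (j+1) := by
    rw [S, ← tsum_mul_left, ← Summable.tsum_sub hU ((hA (j+1)).mul_left _)]
    exact tsum_congr (key hq hq1 hc1 j)
  have h3 : (∑' n, U q c j n) = (q:ℂ)^j * c * S q c (j+2) := by
    rw [Summable.tsum_eq_zero_add hU, U_zero, zero_add, S, ← tsum_mul_left]
    exact tsum_congr (fun n => U_succ hq hq1 hc1 j n)
  rw [h1, h2, h3]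
  ring

lemma Siter {q r : ℝ} (hq : 0 < q) (hq1 : q < 1) (hr : r < 1) {c : ℂ} (hc : ‖c‖ ≤ r) (j : ℕ) :
    S q c 0 - S q c 1 = (∏ i ∈ range j, (-((q:ℂ)^i * c))) * (S q c j - S q c (j+1)) := by
  induction j with
  | zero => simp
  | succ k ih =>
    rw [ih, Srec hq hq1 hr hc k, prod_range_succ]
    ring

lemma S01 {q r : ℝ} (hq : 0 < q) (hq1 : q < 1) (hr : r < 1) {c : ℂ} (hc : ‖c‖ ≤ r) :
    S q c 0 = S q c 1 := by
  have hr0 : 0 ≤ r := (norm_nonneg c).trans hc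
  have h1r : 0 < 1 - r := by linarith
  have h1q : 0 < 1 - q := by linarith
  set C := ∑' n : ℕ, q^(n*(n-1)) * (r/((1-q)*(1-r)))^n with hC
  have hC0 : 0 ≤ C := tsum_nonneg (fun n => by positivity)
  set t := r * (1-r)⁻¹ with ht
  have ht0 : 0 ≤ t := by positivity
  have hbound : ∀ j, ‖S q c 0 - S q c 1‖ ≤
      (∏ i ∈ range j, (q^i * t)) * (2*C*(1-r)⁻¹) := by
    intro j
    rw [Siter hq hq1 hr hc j, norm_mul, norm_prod]
    have h1 : ∏ i ∈ range j, ‖-((q:ℂ)^i*c)‖ ≤ ∏ i ∈ range j, (q^i*r) := by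
      refine Finset.prod_le_prod (fun i _ => norm_nonneg _) (fun i _ => ?_)
      rw [norm_neg, norm_mul, norm_pow, norm_q q hq]
      exact mul_le_mul_of_nonneg_left hc (pow_nonneg hq.le i)
    have hSb := fun j' => norm_S_le hq hq1 hr hc j'
    have hmono : ((1-r)^j)⁻¹ ≤ ((1-r)^(j+1))⁻¹ := by
      apply inv_anti₀ (by positivity)
      calc (1-r)^(j+1) = (1-r)^j * (1-r) := pow_succ _ _
      _ ≤ (1-r)^j * 1 := by
          exact mul_le_mul_of_nonneg_left (by linarith) (by positivity)
      _ = (1-r)^j := mul_one _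
    have h2 : ‖S q c j - S q c (j+1)‖ ≤ 2*C*((1-r)^(j+1))⁻¹ := by
      calc ‖S q c j - S q c (j+1)‖ ≤ ‖S q c j‖ + ‖S q c (j+1)‖ := norm_sub_le _ _
      _ ≤ C*((1-r)^j)⁻¹ + C*((1-r)^(j+1))⁻¹ := add_le_add (hSb j) (hSb (j+1))
      _ ≤ 2*C*((1-r)^(j+1))⁻¹ := by nlinarith [mul_le_mul_of_nonneg_left hmono hC0]
    calc (∏ i ∈ range j, ‖-((q:ℂ)^i*c)‖) * ‖S q c j - S q c (j+1)‖
        ≤ (∏ i ∈ range j, (q^i*r)) * (2*C*((1-r)^(j+1))⁻¹) := by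
          exact mul_le_mul h1 h2 (norm_nonneg _)
            (Finset.prod_nonneg (fun i _ => by positivity))
    _ = (∏ i ∈ range j, (q^i * t)) * (2*C*(1-r)⁻¹) := by
          rw [Finset.prod_mul_distrib, Finset.prod_mul_distrib, prod_const, prod_const,
            card_range, ht, mul_pow, inv_pow, pow_succ, mul_inv]
          ring
  obtain ⟨N, hN⟩ : ∃ N, q^N * t < 1/2 := by
    have h1 : Tendsto (fun N : ℕ => q^N * t) atTop (𝓝 (0*t)) :=
      (tendsto_pow_atTop_nhds_zero_of_lt_one hq.le hq1).mul_const t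
    rw [zero_mul] at h1
    exact (h1.eventually_lt_const (by norm_num : (0:ℝ) < 1/2)).exists
  set D := (∏ i ∈ range N, (q^i*t)) * (2*C*(1-r)⁻¹) with hD
  have hD0 : 0 ≤ D := by
    apply mul_nonneg (Finset.prod_nonneg (fun i _ => by positivity))
    positivity
  have hbound2 : ∀ m, ‖S q c 0 - S q c 1‖ ≤ D * (1/2)^m := by
    intro m
    refine (hbound (N+m)).trans ?_
    rw [hD, prod_range_add]
    have h3 : ∏ i ∈ range m, (q^(N+i)*t) ≤ (1/2)^m := by
      calc ∏ i ∈ range m, (q^(N+i)*t) ≤ ∏ _i ∈ range m, (1/2 : ℝ) := by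
            refine Finset.prod_le_prod (fun i _ => by positivity) (fun i _ => ?_)
            refine le_of_lt (lt_of_le_of_lt ?_ hN)
            exact mul_le_mul_of_nonneg_right
              (pow_le_pow_of_le_one hq.le hq1.le (Nat.le_add_right _ _)) ht0
      _ = (1/2)^m := by rw [prod_const, card_range]
    calc (∏ i ∈ range N, (q^i*t)) * (∏ i ∈ range m, (q^(N+i)*t)) * (2*C*(1-r)⁻¹)
        ≤ (∏ i ∈ range N, (q^i*t)) * (1/2)^m * (2*C*(1-r)⁻¹) := by
          apply mul_le_mul_of_nonneg_right _ (by positivity)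
          exact mul_le_mul_of_nonneg_left h3 (Finset.prod_nonneg (fun i _ => by positivity))
    _ = (∏ i ∈ range N, (q^i*t)) * (2*C*(1-r)⁻¹) * (1/2)^m := by ring
  have htend : Tendsto (fun m : ℕ => D * (1/2)^m) atTop (𝓝 (D * 0)) :=
    (tendsto_pow_atTop_nhds_zero_of_lt_one (by norm_num) (by norm_num)).const_mul D
  rw [mul_zero] at htend
  have hle : ‖S q c 0 - S q c 1‖ ≤ 0 :=
    ge_of_tendsto' htend (fun m => hbound2 m)
  have h0 := le_antisymm hle (norm_nonneg _)
  have h1 : S q c 0 - S q c 1 = 0 := by rwa [norm_le_zero_iff] at hle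
  exact sub_eq_zero.mp h1

lemma A_shift {q : ℝ} (hq : 0 < q) (hq1 : q < 1) {c : ℂ} (hc : ‖c‖ < 1) (n : ℕ) :
    A q ((q:ℂ)*c) 0 n = (1 - c) * A q c 1 n := by
  have hqc : ‖(q:ℂ)*c‖ < 1 := by
    have := norm_mul_pow_le hq hq1 hc 1
    rw [pow_one] at this
    rwa [mul_comm]
  have hPq := qPoch_ne_zero hq hq1 (normq_lt hq hq1) n
  have hPqc := qPoch_ne_zero hq hq1 hqc n
  have h1c : (1:ℂ) - c ≠ 0 := one_sub_ne hc
  rw [A, A, qPoch_succ' c q n]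
  simp only [zero_mul, one_mul, add_zero, Nat.add_zero]
  rw [mul_pow, pow_add]
  field_simp

lemma func_eq {q r : ℝ} (hq : 0 < q) (hq1 : q < 1) (hr : r < 1) {c : ℂ} (hc : ‖c‖ ≤ r) :
    S q ((q:ℂ)*c) 0 = (1 - c) * S q c 0 := by
  have hc1 : ‖c‖ < 1 := lt_of_le_of_lt hc hr
  rw [S01 hq hq1 hr hc, S, S, ← tsum_mul_left]
  exact tsum_congr (fun n => A_shift hq hq1 hc1 n)

lemma Sfun_iter {q : ℝ} (hq : 0 < q) (hq1 : q < 1) {b : ℂ} (hb : ‖b‖ < 1) (k : ℕ) :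
    S q ((q:ℂ)^k * b) 0 = qPochC b q k * S q b 0 := by
  induction k with
  | zero => simp [qPochC]
  | succ k ih =>
    have hck : ‖(q:ℂ)^k * b‖ ≤ ‖b‖ := by
      rw [norm_mul, norm_pow, norm_q q hq]
      calc q^k * ‖b‖ ≤ 1 * ‖b‖ :=
        mul_le_mul_of_nonneg_right (pow_le_one₀ hq.le hq1.le) (norm_nonneg b)
      _ = ‖b‖ := one_mul _
    have h := func_eq hq hq1 hb hck
    rw [show (q:ℂ)^(k+1) * b = (q:ℂ) * ((q:ℂ)^k * b) by ring, h, ih, qPoch_succ]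
    ring

lemma S_sub_one {q r : ℝ} (hq : 0 < q) (hq1 : q < 1) (hr : r < 1) {c : ℂ} (hc : ‖c‖ ≤ r) :
    ‖S q c 0 - 1‖ ≤ ‖c‖ * ((∑' n : ℕ, q^(n*(n-1)) * (r/((1-q)*(1-r)))^n) * ((1-q)*(1-r))⁻¹) := by
  have hr0 : 0 ≤ r := (norm_nonneg c).trans hc
  have h1q : 0 < 1 - q := by linarith
  have h1r : 0 < 1 - r := by linarith
  have hρ : 0 ≤ r/((1-q)*(1-r)) := by positivity
  have hA := summable_A hq hq1 hr hc 0
  have hA00 : A q c 0 0 = 1 := by simp [A, qPochC]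
  have h1 : S q c 0 - 1 = ∑' n, A q c 0 (n+1) := by
    rw [S, Summable.tsum_eq_zero_add hA, hA00]
    ring
  have hb : ∀ n, ‖A q c 0 (n+1)‖ ≤
      ‖c‖ * (q^(n*(n-1)) * (r/((1-q)*(1-r)))^n * ((1-q)*(1-r))⁻¹) := by
    intro n
    have hqn : ‖(q:ℂ)‖ = q := norm_q q hq
    have hden : (1-q)^(n+1) * (1-r)^(n+1) ≤
        ‖qPochC (q:ℂ) q (n+1) * qPochC c q (n+1+0)‖ := by
      rw [norm_mul, Nat.add_zero]
      exact mul_le_mul (qPoch_norm_ge hq hq1 (le_of_eq hqn) hq1 (n+1))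
        (qPoch_norm_ge hq hq1 hc hr (n+1)) (pow_nonneg h1r.le _) (norm_nonneg _)
    have hnum : ‖(q:ℂ)^((n+1)*((n+1)-1) + 0*(n+1)) * c^(n+1)‖ ≤
        q^(n*(n-1)) * (‖c‖ * r^n) := by
      rw [norm_mul, norm_pow, norm_pow, hqn]
      refine mul_le_mul ?_ ?_ (pow_nonneg (norm_nonneg c) _) (pow_nonneg hq.le _)
      · refine pow_le_pow_of_le_one hq.le hq1.le ?_
        calc n*(n-1) ≤ (n+1)*n := Nat.mul_le_mul (Nat.le_succ n) (Nat.sub_le n 1)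
        _ ≤ (n+1)*((n+1)-1) + 0*(n+1) := by simp
      · rw [pow_succ']
        exact mul_le_mul_of_nonneg_left (pow_le_pow_left₀ (norm_nonneg c) hc n)
          (norm_nonneg c)
    calc ‖A q c 0 (n+1)‖ ≤ (q^(n*(n-1)) * (‖c‖ * r^n)) / ((1-q)^(n+1) * (1-r)^(n+1)) := by
          rw [A, norm_div]
          exact div_le_div₀ (by positivity) hnum (by positivity) hden
    _ = ‖c‖ * (q^(n*(n-1)) * (r/((1-q)*(1-r)))^n * ((1-q)*(1-r))⁻¹) := by
          rw [div_pow, mul_pow, pow_succ, pow_succ]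
          field_simp
  have hsum := summable_aux hq hq1 hρ (q := q)
  have hsb : Summable (fun n => ‖c‖ * (q^(n*(n-1)) * (r/((1-q)*(1-r)))^n * ((1-q)*(1-r))⁻¹)) :=
    ((hsum.mul_right _).mul_left _)
  have hsn : Summable (fun n => ‖A q c 0 (n+1)‖) :=
    Summable.of_nonneg_of_le (fun n => norm_nonneg _) hb hsb
  rw [h1]
  calc ‖∑' n, A q c 0 (n+1)‖ ≤ ∑' n, ‖A q c 0 (n+1)‖ := norm_tsum_le_tsum_norm hsn
  _ ≤ ∑' n, ‖c‖ * (q^(n*(n-1)) * (r/((1-q)*(1-r)))^n * ((1-q)*(1-r))⁻¹) :=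
      Summable.tsum_le_tsum hb hsn hsb
  _ = ‖c‖ * ((∑' n : ℕ, q^(n*(n-1)) * (r/((1-q)*(1-r)))^n) * ((1-q)*(1-r))⁻¹) := by
      rw [tsum_mul_left, tsum_mul_right]

lemma mult {q : ℝ} (hq : 0 < q) (hq1 : q < 1) {b : ℂ} (hb : ‖b‖ < 1) :
    Multipliable (fun m : ℕ => 1 - b * (q:ℂ)^m) := by
  refine Complex.multipliable_of_summable_log ?_
  set r := ‖b‖ with hrdef
  have hr0 : 0 ≤ r := norm_nonneg b
  have h1r : 0 < 1 - r := by linarith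
  refine Summable.of_norm_bounded (g := fun m => (r*(1-r)⁻¹/2 + 1) * (r * q^m)) ?_ ?_
  · exact ((summable_geometric_of_lt_one hq.le hq1).mul_left r).mul_left _
  · intro m
    have hzn : ‖-(b*(q:ℂ)^m)‖ = r * q^m := by
      rw [norm_neg, norm_mul, norm_pow, norm_q q hq]
    have hu1 : r * q^m ≤ r :=
      le_trans (mul_le_mul_of_nonneg_left (pow_le_one₀ hq.le hq1.le) hr0) (le_of_eq (mul_one r))
    have hz1 : ‖-(b*(q:ℂ)^m)‖ < 1 := by rw [hzn]; linarith
    have hlog := Complex.norm_log_one_add_le hz1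
    rw [show (1:ℂ) + -(b*(q:ℂ)^m) = 1 - b*(q:ℂ)^m by ring] at hlog
    refine le_trans hlog ?_
    rw [hzn]
    set u := r * q^m with hu
    have hu2 : u < 1 := hzn ▸ hz1
    have hu0 : 0 ≤ u := by positivity
    have hinv : (1-u)⁻¹ ≤ (1-r)⁻¹ := by
      apply inv_anti₀ h1r
      linarith
    have h2 : u * (1-u)⁻¹ ≤ r * (1-r)⁻¹ :=
      mul_le_mul hu1 hinv (inv_nonneg.mpr (by linarith)) hr0
    have h3 : u^2 * (1-u)⁻¹ ≤ u * (r * (1-r)⁻¹) := by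
      calc u^2 * (1-u)⁻¹ = u * (u * (1-u)⁻¹) := by ring
      _ ≤ u * (r * (1-r)⁻¹) := mul_le_mul_of_nonneg_left h2 hu0
    show u ^ 2 * (1 - u)⁻¹ / 2 + u ≤ (r * (1 - r)⁻¹ / 2 + 1) * u
    nlinarith [h3]

end C15

/-- Cauchy's identity: for 0 < q < 1 and |b| < 1,
Σ_{n≥0} q^{n(n-1)} bⁿ/((q;q)ₙ(b;q)ₙ) = 1/(b;q)_∞. -/
theorem stmt_15 (q : ℝ) (b : ℂ) (hq : 0 < q) (hq1 : q < 1) (hb : ‖b‖ < 1) :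
    (∑' n : ℕ, (q:ℂ) ^ (n * (n-1)) * b ^ n / (qPochC (q:ℂ) q n * qPochC b q n)) =
      (qPochInfC b q)⁻¹ := by
  have hb' : ‖b‖ < 1 := hb
  have hmult := C15.mult hq hq1 hb'
  have hTP : Tendsto (fun k => qPochC b q k) atTop (𝓝 (qPochInfC b q)) := by
    have := hmult.hasProd.tendsto_prod_nat
    simpa [qPochC, qPochInfC] using this
  have hlim1 : Tendsto (fun k => C15.S q ((q:ℂ)^k * b) 0) atTop
      (𝓝 (qPochInfC b q * C15.S q b 0)) := by
    refine (hTP.mul_const _).congr (fun k => ?_)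
    exact (C15.Sfun_iter hq hq1 hb' k).symm
  have hck : ∀ k : ℕ, ‖(q:ℂ)^k * b‖ ≤ ‖b‖ := by
    intro k
    rw [norm_mul, norm_pow, C15.norm_q q hq]
    calc q^k * ‖b‖ ≤ 1 * ‖b‖ :=
      mul_le_mul_of_nonneg_right (pow_le_one₀ hq.le hq1.le) (norm_nonneg b)
    _ = ‖b‖ := one_mul _
  have hlim2 : Tendsto (fun k => C15.S q ((q:ℂ)^k * b) 0) atTop (𝓝 1) := by
    rw [← tendsto_sub_nhds_zero_iff]
    rw [tendsto_zero_iff_norm_tendsto_zero]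
    set K := (∑' n : ℕ, q^(n*(n-1)) * (‖b‖/((1-q)*(1-‖b‖)))^n) * ((1-q)*(1-‖b‖))⁻¹ with hK
    refine squeeze_zero (fun k => norm_nonneg _)
      (fun k => C15.S_sub_one hq hq1 hb' (hck k)) ?_
    have heq : ∀ k : ℕ, ‖(q:ℂ)^k * b‖ * K = (q^k * (‖b‖ * K)) := by
      intro k
      rw [norm_mul, norm_pow, C15.norm_q q hq]
      ring
    have h0 : Tendsto (fun k : ℕ => q^k * (‖b‖ * K)) atTop (𝓝 (0 * (‖b‖ * K))) :=
      (tendsto_pow_atTop_nhds_zero_of_lt_one hq.le hq1).mul_const _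
    rw [zero_mul] at h0
    exact (h0.congr (fun k => (heq k).symm))
  have hone : qPochInfC b q * C15.S q b 0 = 1 := tendsto_nhds_unique hlim1 hlim2
  have hS : (∑' n : ℕ, (q:ℂ) ^ (n * (n-1)) * b ^ n / (qPochC (q:ℂ) q n * qPochC b q n)) =
      C15.S q b 0 := by
    refine tsum_congr (fun n => ?_)
    simp [C15.S, C15.A]
  rw [hS]
  exact (inv_eq_of_mul_eq_one_right hone).symm
end

section
/- For 0 < q < 1 and real α > -1, the determinant of the Hankel matrix ((q^{α+1};q)_{j+k})_{0≤j,k≤n} equals q^{n(n+1)α/2} q^{n(n+1)(2n+1)/6} ∏_{k=0}^{n} (q;q)_k (q^{α+1};q)_k. -/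
lemma qPoch_zero (a q : ℝ) : qPoch a q 0 = 1 := by simp [qPoch]

lemma qPoch_succ (a q : ℝ) (n : ℕ) : qPoch a q (n+1) = qPoch a q n * (1 - a * q ^ n) :=
  Finset.prod_range_succ _ _

lemma qPoch_succ' (a q : ℝ) (n : ℕ) : qPoch a q (n+1) = (1 - a) * qPoch (a*q) q n := by
  unfold qPoch
  rw [Finset.prod_range_succ']
  simp only [pow_zero, mul_one, pow_succ]
  rw [mul_comm]
  congr 1
  exact Finset.prod_congr rfl fun i _ => by ring_nf

lemma hankel (n : ℕ) : ∀ a q : ℝ,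
    (Matrix.of fun j k : Fin (n+1) => qPoch a q (j.1 + k.1)).det =
      ∏ k ∈ Finset.range (n+1), a^k * q^(k*(k-1)) * (qPoch q q k * qPoch a q k) := by
  induction n with
  | zero =>
      intro a q
      simp [Matrix.det_fin_one, qPoch_zero]
  | succ n ih =>
      intro a q
      -- reduced matrix
      set R : Matrix (Fin (n+2)) (Fin (n+2)) ℝ :=
        Matrix.of (Fin.cons (fun k : Fin (n+2) => qPoch a q k.1)
          (fun i k => a * q ^ (i : ℕ) * (1 - q ^ (k : ℕ)) * qPoch a q (i.1 + k.1))) with hR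
      have hdet : (Matrix.of fun j k : Fin (n+2) => qPoch a q (j.1 + k.1)).det = R.det := by
        apply Matrix.det_eq_of_forall_row_eq_smul_add_pred (fun i => (1 - a * q ^ (i:ℕ)))
        · intro j; simp [hR]
        · intro i j
          simp only [hR, Matrix.of_apply, Fin.cons_succ]
          show qPoch a q (i.1 + 1 + j.1) = _
          have : i.1 + 1 + j.1 = (i.1 + j.1) + 1 := by omega
          rw [this, qPoch_succ, pow_add]
          show _ = _ + (1 - a * q ^ (i:ℕ)) * qPoch a q ((Fin.castSucc i).1 + j.1)
          rw [Fin.coe_castSucc]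
          ring
      rw [hdet, Matrix.det_succ_column_zero, Fin.sum_univ_succ]
      have h0 : ∀ i : Fin (n+1), R i.succ 0 = 0 := by
        intro i; simp [hR]
      simp only [h0, mul_zero, zero_mul, Finset.sum_const_zero, add_zero]
      have hR00 : R 0 0 = 1 := by simp [hR, qPoch_zero]
      rw [hR00, Fin.succAbove_zero]
      have hsub : (R.submatrix Fin.succ Fin.succ) =
          Matrix.of fun j k : Fin (n+1) =>
            (a * q ^ (j:ℕ)) * (((1 - q ^ ((k:ℕ)+1)) * (1 - a)) * qPoch (a*q) q (j.1 + k.1)) := by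
        ext j k
        simp only [Matrix.submatrix_apply, hR, Matrix.of_apply, Fin.cons_succ, Fin.val_succ]
        have : j.1 + (k.1 + 1) = (j.1 + k.1) + 1 := by omega
        rw [this, qPoch_succ']
        ring
      rw [hsub]
      rw [show (Matrix.of fun j k : Fin (n+1) =>
            (a * q ^ (j:ℕ)) * (((1 - q ^ ((k:ℕ)+1)) * (1 - a)) * qPoch (a*q) q (j.1 + k.1)))
          = Matrix.of (fun j k : Fin (n+1) => (a * q ^ (j:ℕ)) *
              (Matrix.of (fun j k : Fin (n+1) => ((1 - q ^ ((k:ℕ)+1)) * (1 - a)) *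
                (Matrix.of fun j k : Fin (n+1) => qPoch (a*q) q (j.1 + k.1)) j k)) j k) from rfl]
      rw [Matrix.det_mul_column, Matrix.det_mul_row, ih (a*q) q]
      conv_rhs => rw [Finset.prod_range_succ']
      simp only [pow_zero, mul_one, qPoch_zero, one_mul, Fin.val_zero, pow_zero, mul_one,
        Nat.zero_mul, Nat.mul_zero]
      rw [Fin.prod_univ_eq_prod_range (fun i => a * q ^ i),
        Fin.prod_univ_eq_prod_range (fun i => (1 - q ^ (i+1)) * (1 - a)),
        ← Finset.prod_mul_distrib, ← Finset.prod_mul_distrib]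
      refine Finset.prod_congr rfl fun k _ => ?_
      have hk : (k+1)*((k+1)-1) = k*(k-1) + 2*k := by
        cases k with
        | zero => rfl
        | succ m => simp only [Nat.add_sub_cancel]; ring
      rw [hk, qPoch_succ, qPoch_succ', pow_add, pow_succ]
      ring

lemma sum_sq_aux : ∀ m : ℕ, 6 * ((∑ k ∈ Finset.range (m+1), k) + ∑ k ∈ Finset.range (m+1), (k*(k-1))) = m*(m+1)*(2*m+1) := by
  intro m
  induction m with
  | zero => decide
  | succ p ih =>
      rw [Finset.sum_range_succ (fun k => k) (p+1), Finset.sum_range_succ (fun k => k*(k-1)) (p+1)]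
      have e1 : (p + 1) * ((p+1) - 1) = (p+1)*p := by simp
      rw [e1]
      zify at ih ⊢
      linear_combination ih

/-- det ((q^{α+1};q)_{j+k})_{0≤j,k≤n}
= q^{n(n+1)α/2} q^{n(n+1)(2n+1)/6} ∏_{k=0}^n (q;q)_k (q^{α+1};q)_k. -/
theorem stmt_16 (q α : ℝ) (hq : 0 < q) (hq1 : q < 1) (hα : -1 < α) (n : ℕ) :
    (Matrix.of fun j k : Fin (n+1) => qPoch (q ^ (α+1)) q (j.1 + k.1)).det =
      q ^ ((n:ℝ) * (n+1) * α / 2) * q ^ (n * (n+1) * (2*n+1) / 6) *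
        ∏ k ∈ Finset.range (n+1), qPoch q q k * qPoch (q ^ (α+1)) q k := by
  rw [hankel n (q ^ (α+1)) q, Finset.prod_mul_distrib, Finset.prod_mul_distrib,
    Finset.prod_pow_eq_pow_sum, Finset.prod_pow_eq_pow_sum]
  set S1 := ∑ k ∈ Finset.range (n+1), k with hS1def
  set S2 := ∑ k ∈ Finset.range (n+1), (k*(k-1)) with hS2def
  have h1 : S1 * 2 = (n+1) * n := Finset.sum_range_id_mul_two (n+1)
  have h6 : 6 * (S1 + S2) = n*(n+1)*(2*n+1) := sum_sq_aux n
  have hM : n*(n+1)*(2*n+1)/6 = S1 + S2 := by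
    rw [← h6]; exact Nat.mul_div_cancel_left _ (by norm_num)
  rw [hM, pow_add]
  have hS1 : (S1:ℝ) = (n:ℝ)*(n+1)/2 := by
    have := congrArg (Nat.cast : ℕ → ℝ) h1
    push_cast at this
    linarith
  have key : (q^(α+1))^S1 = q^((n:ℝ)*(n+1)*α/2) * q^S1 := by
    calc (q^(α+1))^S1 = q^((α+1)*(S1:ℝ)) := by
          rw [← Real.rpow_natCast (q^(α+1)) S1, ← Real.rpow_mul hq.le]
      _ = q^((n:ℝ)*(n+1)*α/2 + S1) := by rw [hS1]; ring_nf
      _ = q^((n:ℝ)*(n+1)*α/2) * q^(S1:ℝ) := Real.rpow_add hq _ _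
      _ = q^((n:ℝ)*(n+1)*α/2) * q^S1 := by rw [Real.rpow_natCast]
  rw [key]
  ring
end
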